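/- Let A be the adjacency matrix of an undirected graph with all degrees d_i ≥ 1, D = diag(d). Suppose (v_a; v_b) is an eigenvector of [[A, I−D],[I, 0]] with eigenvalue λ ≥ 1, where v_a and v_b are entrywise nonnegative and 1ᵀv_a = 1. Then 1ᵀ(D⁻¹ A v_a − v_a) ≥ 0 (the generalized local friendship inequality holds for nonbacktracking eigenvector centrality). -/

import Mathlib

theorem local_nonbacktracking_paradox
    (n : ℕ) (hn : 0 < n) (A : Matrix (Fin n) (Fin n) ℝ)
    (hsym : A.IsSymm)
    (h01 : ∀ i j, A i j = 0 ∨ A i j = 1)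
    (hdiag : ∀ i, A i i = 0)
    (d : Fin n → ℝ) (hd : d = A.mulVec (fun _ => 1))
    (hdeg : ∀ i, 1 ≤ d i)
    (lam : ℝ) (hlam : 1 ≤ lam)
    (va vb : Fin n → ℝ)
    (hva : ∀ i, 0 ≤ va i) (hvb : ∀ i, 0 ≤ vb i)
    (hnorm : ∑ i, va i = 1)
    (heig : (Matrix.fromBlocks A (1 - Matrix.diagonal d) 1 0).mulVec
      (Sum.elim va vb) = lam • Sum.elim va vb) :
    (∑ i, (∑ j, A i j * va j) / d i) - ∑ i, va i ≥ 0 := by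
  have hlam0 : (0:ℝ) < lam := lt_of_lt_of_le one_pos hlam
  have hlamne : lam ≠ 0 := hlam0.ne'
  have hdpos : ∀ i, (0:ℝ) < d i := fun i => lt_of_lt_of_le one_pos (hdeg i)
  rw [Matrix.fromBlocks_mulVec] at heig
  simp only [Sum.elim_comp_inl, Sum.elim_comp_inr] at heig
  -- second block: va = lam • vb
  have heig2 : ∀ i, va i = lam * vb i := by
    intro i
    have := congrFun heig (Sum.inr i)
    simpa [Matrix.one_mulVec, Matrix.zero_mulVec] using this
  have hvb_eq : ∀ i, vb i = va i / lam := by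
    intro i
    field_simp
    linarith [heig2 i]
  -- first block
  have hA : ∀ i, A.mulVec va i = lam * va i - va i / lam + d i * (va i / lam) := by
    intro i
    have h := congrFun heig (Sum.inl i)
    simp only [Sum.elim_inl, Pi.add_apply, Matrix.sub_mulVec, Matrix.one_mulVec,
      Matrix.mulVec_diagonal, Pi.sub_apply, Pi.smul_apply, smul_eq_mul] at h
    rw [hvb_eq i] at h
    linarith
  set S := ∑ i, va i / d i with hS
  set T := ∑ i, d i * va i with hT
  -- column sums of A are d
  have hcol : ∀ j, ∑ i, A i j = d j := by
    intro j
    rw [hd]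
    simp [Matrix.mulVec, dotProduct]
    exact Finset.sum_congr rfl fun i _ => (hsym.apply i j).symm
  -- row-sum identity gives T
  have hsumA : ∑ i, A.mulVec va i = T := by
    rw [hT]
    simp only [Matrix.mulVec, dotProduct]
    rw [Finset.sum_comm]
    exact Finset.sum_congr rfl fun j _ => by rw [← Finset.sum_mul, hcol j]
  have hTid : T * (lam - 1) = (lam - 1) * (lam + 1) := by
    have h1 : ∑ i, A.mulVec va i
        = ∑ i, (lam * va i - va i / lam + d i * (va i / lam)) :=
      Finset.sum_congr rfl fun i _ => hA i
    rw [hsumA] at h1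
    have hsplit : ∀ i, lam * va i - va i / lam + d i * (va i / lam)
        = lam * va i - (1/lam) * va i + (1/lam) * (d i * va i) := by
      intro i; ring
    rw [Finset.sum_congr rfl fun i _ => hsplit i, Finset.sum_add_distrib,
      Finset.sum_sub_distrib, ← Finset.mul_sum, ← Finset.mul_sum, ← Finset.mul_sum,
      hnorm, ← hT] at h1
    field_simp at h1
    nlinarith [h1]
  -- Cauchy–Schwarz: 1 ≤ T * S
  have hCS : 1 ≤ T * S := by
    have key := Finset.sum_mul_sq_le_sq_mul_sq Finset.univ
      (fun i => Real.sqrt (d i * va i)) (fun i => Real.sqrt (va i / d i))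
    have e1 : ∀ i : Fin n, Real.sqrt (d i * va i) * Real.sqrt (va i / d i) = va i := by
      intro i
      have hdne : d i ≠ 0 := (hdpos i).ne'
      rw [← Real.sqrt_mul (mul_nonneg (hdpos i).le (hva i))]
      have : d i * va i * (va i / d i) = va i ^ 2 := by field_simp
      rw [this, Real.sqrt_sq (hva i)]
    have e2 : ∀ i : Fin n, Real.sqrt (d i * va i) ^ 2 = d i * va i := fun i =>
      Real.sq_sqrt (mul_nonneg (hdpos i).le (hva i))
    have e3 : ∀ i : Fin n, Real.sqrt (va i / d i) ^ 2 = va i / d i := fun i =>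
      Real.sq_sqrt (div_nonneg (hva i) (hdpos i).le)
    simp only [e1, e2, e3, hnorm, one_pow] at key
    rw [← hT, ← hS] at key
    exact key
  have hS0 : 0 ≤ S := Finset.sum_nonneg fun i _ =>
    div_nonneg (hva i) (hdpos i).le
  -- rewrite goal
  have hgoal : (∑ i, (∑ j, A i j * va j) / d i)
      = (lam - 1/lam) * S + 1/lam := by
    have hterm : ∀ i : Fin n, (∑ j, A i j * va j) / d i
        = (lam - 1/lam) * (va i / d i) + (1/lam) * va i := by
      intro i
      have hdne : d i ≠ 0 := (hdpos i).ne'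
      have h := hA i
      simp only [Matrix.mulVec, dotProduct] at h
      rw [h]
      field_simp
    rw [Finset.sum_congr rfl fun i _ => hterm i, Finset.sum_add_distrib,
      ← Finset.mul_sum, ← Finset.mul_sum, hnorm, ← hS]
    ring
  rw [hgoal, hnorm]
  have key : (lam - 1) * (T * S - 1) ≥ 0 := by
    rcases eq_or_lt_of_le hlam with h | h
    · simp [← h]
    · exact mul_nonneg (by linarith) (by linarith)
  have e : lam * ((lam - 1/lam) * S + 1/lam - 1)
      = (lam + 1) * S * (lam - 1) - (lam - 1) := by
    field_simp
    ring
  have hTS : (lam + 1) * S * (lam - 1) = T * S * (lam - 1) := by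
    nlinarith [hTid]
  have hpos : 0 ≤ lam * ((lam - 1/lam) * S + 1/lam - 1) := by
    rw [e, hTS]
    nlinarith [key]
  nlinarith [hpos, hlam0]
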